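/- arXiv:1711.00089 — 2 statements merged into one kernel-verified Lean document; each statement's English description precedes it below -/
import Mathlib

section
/- Let M_j = x_0^{a_{0,j}}···x_n^{a_{n,j}}, j ∈ J, be monomials with all exponents ≥ 1 and a_{0,j} ≤ a_{i,j} for all i,j. Set I = (X_0) + ⋂_{j∈J} M_j^⊥ in T = ℂ[X_0,...,X_n]. Then a monomial N of T does not lie in I if and only if N divides X_1^{a_{1,j}}···X_n^{a_{n,j}} for some j ∈ J. -/
open MvPolynomial

private lemma mem_span_pow {n : ℕ} (N : Fin (n+1) → ℕ) (i : Fin (n+1)) (e : ℕ)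
    (h : e ≤ N i) :
    monomial (Finsupp.equivFunOnFinite.symm N) (1 : ℂ) ∈
      Ideal.span ({X i ^ e} : Set (MvPolynomial (Fin (n+1)) ℂ)) := by
  refine Ideal.mem_span_singleton.2 ⟨monomial (Finsupp.equivFunOnFinite.symm N - Finsupp.single i e) 1, ?_⟩
  rw [X_pow_eq_monomial, monomial_mul, one_mul]
  congr 1
  rw [add_tsub_cancel_of_le]
  rwa [Finsupp.single_le_iff]

private lemma coeff_span_zero {n : ℕ} (N : Fin (n+1) → ℕ)
    (S : Set (MvPolynomial (Fin (n+1)) ℂ))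
    (hS : ∀ P ∈ S, ∀ r : MvPolynomial (Fin (n+1)) ℂ,
      coeff (Finsupp.equivFunOnFinite.symm N) (r * P) = 0)
    (q : MvPolynomial (Fin (n+1)) ℂ) (hq : q ∈ Ideal.span S) :
    coeff (Finsupp.equivFunOnFinite.symm N) q = 0 := by
  have : ∀ r : MvPolynomial (Fin (n+1)) ℂ,
      coeff (Finsupp.equivFunOnFinite.symm N) (r * q) = 0 := by
    refine Submodule.span_induction (p := fun q _ => ∀ r, coeff _ (r * q) = 0)
      (fun P hP => hS P hP) (by simp) (fun x y _ _ hx hy r => by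
        rw [mul_add, coeff_add, hx, hy, add_zero])
      (fun c x _ hx r => by rw [smul_eq_mul, ← mul_assoc]; exact hx _) hq
  simpa using this 1

private lemma coeff_rX_pow_zero {n : ℕ} (N : Fin (n+1) → ℕ) (i : Fin (n+1)) (e : ℕ)
    (h : N i < e) (r : MvPolynomial (Fin (n+1)) ℂ) :
    coeff (Finsupp.equivFunOnFinite.symm N) (r * X i ^ e) = 0 := by
  rw [X_pow_eq_monomial, coeff_mul_monomial', if_neg]
  rw [Finsupp.single_le_iff]
  exact fun hle => absurd hle (by simpa using Nat.not_le.2 h)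

/-- Let `M_j = x_0^{a_{0,j}} ⋯ x_n^{a_{n,j}}`, `j ∈ J`, with all exponents `≥ 1` and
`a_{0,j} ≤ a_{i,j}` for all `i, j`.  With `M_j^⊥ = (X_0^{a_{0,j}+1},…,X_n^{a_{n,j}+1})` and
`I = (X_0) + ⋂_j M_j^⊥` in `T = ℂ[X_0,…,X_n]`, a monomial `X^N` does not lie in `I` iff
`X^N` divides `X_1^{a_{1,j}} ⋯ X_n^{a_{n,j}}` for some `j ∈ J`. -/
theorem standard_monomials (n : ℕ) (J : Type) [Fintype J] (a : J → Fin (n + 1) → ℕ)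
    (h1 : ∀ j i, 1 ≤ a j i) (h0 : ∀ j i, a j 0 ≤ a j i) (N : Fin (n + 1) → ℕ) :
    monomial (Finsupp.equivFunOnFinite.symm N) (1 : ℂ) ∉
        Ideal.span {X (0 : Fin (n + 1))} +
          ⨅ j, Ideal.span {P : MvPolynomial (Fin (n + 1)) ℂ | ∃ i, P = X i ^ (a j i + 1)} ↔
      ∃ j, N 0 = 0 ∧ ∀ i, i ≠ 0 → N i ≤ a j i := by
  constructor
  · intro hnot
    by_contra hc
    push_neg at hc
    apply hnot
    by_cases h00 : N 0 = 0
    · refine Submodule.mem_sup_right (Ideal.mem_iInf.2 fun j => ?_)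
      obtain ⟨i, hi0, hi⟩ := hc j h00
      refine Ideal.span_mono ?_ (mem_span_pow N i (a j i + 1) (by omega))
      rintro P hP
      exact ⟨i, by simpa using hP⟩
    · refine Submodule.mem_sup_left ?_
      simpa using mem_span_pow N 0 1 (by omega)
  · rintro ⟨j, hN0, hle⟩ hmem
    obtain ⟨p, hp, q, hq, hpq⟩ := Submodule.mem_sup.1 hmem
    have hq' := Ideal.mem_iInf.1 hq j
    have c1 : coeff (Finsupp.equivFunOnFinite.symm N) p = 0 := by
      refine coeff_span_zero N _ ?_ p hp
      rintro P rfl r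
      simpa using coeff_rX_pow_zero N 0 1 (by omega) r
    have c2 : coeff (Finsupp.equivFunOnFinite.symm N) q = 0 := by
      refine coeff_span_zero N _ ?_ q hq'
      rintro P ⟨i, rfl⟩ r
      refine coeff_rX_pow_zero N i (a j i + 1) ?_ r
      by_cases hi : i = 0
      · subst hi; omega
      · have := hle i hi; omega
    have := congrArg (coeff (Finsupp.equivFunOnFinite.symm N)) hpq
    rw [coeff_add, c1, c2, coeff_monomial, if_pos rfl] at this
    simp at this
end

section
/- With the setup of Proposition 2.3 (monomials M_j = x_0^{a_{0,j}}···x_n^{a_{n,j}}, 1 ≤ a_{0,j} ≤ a_{i,j} for all i,j), the ℂ-vector space dimension of A = T/((X_0) + ⋂_{j∈J} M_j^⊥) equals ∑_{∅≠S⊆J} (−1)^{|S|+1} ∏_{i=1}^n (min_{j∈S} a_{i,j} + 1). -/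
open MvPolynomial


lemma aux_finrank {σ : Type} (D : Set (σ →₀ ℕ))
    (hup : ∀ ⦃d e : σ →₀ ℕ⦄, d ∈ D → d ≤ e → e ∈ D)
    (U : Finset (σ →₀ ℕ)) (hD : Dᶜ = ↑U) :
    Module.finrank ℂ (MvPolynomial σ ℂ ⧸ Ideal.span ((fun s => monomial s (1:ℂ)) '' D))
      = U.card := by
  classical
  set I : Ideal (MvPolynomial σ ℂ) := Ideal.span ((fun s => monomial s (1:ℂ)) '' D) with hIdef
  have hmem : ∀ p : MvPolynomial σ ℂ, p ∈ I ↔ ∀ d ∈ p.support, d ∈ D := by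
    intro p
    rw [hIdef, mem_ideal_span_monomial_image]
    constructor
    · intro h d hd; obtain ⟨s, hs, hsd⟩ := h d hd; exact hup hs hsd
    · intro h d hd; exact ⟨d, h d hd, le_rfl⟩
  set e : MvPolynomial σ ℂ ≃ₗ[ℂ] ((σ →₀ ℕ) →₀ ℂ) := (MvPolynomial.basisMonomials σ ℂ).repr with he
  have hesupp : ∀ p : MvPolynomial σ ℂ, (e p).support = p.support := fun _ => rfl
  have hPQ : (I.restrictScalars ℂ).map (e : MvPolynomial σ ℂ →ₗ[ℂ] _)
      = Finsupp.supported ℂ ℂ D := by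
    ext x
    simp only [Submodule.mem_map, Submodule.restrictScalars_mem, Finsupp.mem_supported]
    constructor
    · rintro ⟨p, hp, rfl⟩
      intro d hd
      rw [LinearEquiv.coe_coe, hesupp] at hd
      exact (hmem p).1 hp d hd
    · intro hx
      refine ⟨e.symm x, ?_, by simp⟩
      rw [hmem]
      intro d hd
      rw [← hesupp (e.symm x), LinearEquiv.apply_symm_apply] at hd
      exact hx hd
  have hcompl : IsCompl (Finsupp.supported ℂ ℂ D) (Finsupp.supported ℂ ℂ Dᶜ) := by
    constructor
    · exact Finsupp.disjoint_supported_supported disjoint_compl_right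
    · rw [codisjoint_iff, ← Finsupp.supported_union, Set.union_compl_self,
        Finsupp.supported_univ]
  have E : (MvPolynomial σ ℂ ⧸ I) ≃ₗ[ℂ] (↥U →₀ ℂ) :=
    (Submodule.Quotient.restrictScalarsEquiv ℂ I).symm ≪≫ₗ
      Submodule.Quotient.equiv _ _ e hPQ ≪≫ₗ
      Submodule.quotientEquivOfIsCompl _ _ hcompl ≪≫ₗ
      LinearEquiv.ofEq _ _ (by rw [hD]) ≪≫ₗ
      Finsupp.supportedEquivFinsupp (↑U : Set (σ →₀ ℕ)) ≪≫ₗ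
      Finsupp.domLCongr (Equiv.refl _)
  rw [E.finrank_eq, Module.finrank_finsupp_self, Fintype.card_coe]

/-- With monomials `M_j = x_0^{a_{0,j}} ⋯ x_n^{a_{n,j}}`, `1 ≤ a_{0,j} ≤ a_{i,j}` for all
`i, j`, the `ℂ`-dimension of `A = T/((X_0) + ⋂_j M_j^⊥)` (where
`M_j^⊥ = (X_0^{a_{0,j}+1},…,X_n^{a_{n,j}+1})`) equals
`∑_{∅ ≠ S ⊆ J} (−1)^{|S|+1} ∏_{i=1}^n (min_{j ∈ S} a_{i,j} + 1)`. -/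
theorem dim_apolar_quotient (n : ℕ) (J : Type) [Fintype J] [DecidableEq J]
    (a : J → Fin (n + 1) → ℕ) (h1 : ∀ j i, 1 ≤ a j i) (h0 : ∀ j i, a j 0 ≤ a j i) :
    (Module.finrank ℂ
        (MvPolynomial (Fin (n + 1)) ℂ ⧸
          (Ideal.span {X (0 : Fin (n + 1))} +
            ⨅ j, Ideal.span
              {P : MvPolynomial (Fin (n + 1)) ℂ | ∃ i, P = X i ^ (a j i + 1)})) : ℤ) =
      ∑ S ∈ ((Finset.univ : Finset J).powerset.filter Finset.Nonempty).attach,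
        (-1 : ℤ) ^ (S.1.card + 1) *
          ∏ i : Fin n,
            ((S.1.inf' (Finset.mem_filter.mp S.2).2 fun j => a j i.succ : ℕ) + 1 : ℤ) := by
  classical
  set b : J → (Fin (n + 1) →₀ ℕ) :=
    fun j => Finsupp.equivFunOnFinite.symm (fun i => if i = 0 then 0 else a j i) with hb
  have hbapp : ∀ j i, b j i = if i = 0 then 0 else a j i := fun j i => rfl
  set U : Finset (Fin (n + 1) →₀ ℕ) :=
    Finset.univ.biUnion (fun j => Finset.Iic (b j)) with hU
  set D : Set (Fin (n + 1) →₀ ℕ) :=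
    {d | 1 ≤ d 0 ∨ ∀ j, ∃ i, a j i + 1 ≤ d i} with hDdef
  have hD : Dᶜ = ↑U := by
    ext d
    rw [Set.mem_compl_iff, Finset.mem_coe, hU, Finset.mem_biUnion]
    simp only [hDdef, Set.mem_setOf_eq, not_or, not_le, not_forall, not_exists,
      Finset.mem_univ, true_and, Finset.mem_Iic, Finsupp.le_def]
    constructor
    · rintro ⟨hd0, j, hj⟩
      refine ⟨j, fun i => ?_⟩
      rw [hbapp]
      split_ifs with h
      · subst h; omega
      · have := hj i; omega
    · rintro ⟨j, hj⟩
      have hd0 : d 0 = 0 := by have := hj 0; rw [hbapp] at this; simpa using this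
      refine ⟨by omega, j, fun i => ?_⟩
      have := hj i
      rw [hbapp] at this
      split_ifs at this with h
      · subst h; omega
      · omega
  have hup : ∀ ⦃d e : Fin (n + 1) →₀ ℕ⦄, d ∈ D → d ≤ e → e ∈ D := by
    rintro d e (h | h) hde
    · exact Or.inl (h.trans (hde 0))
    · exact Or.inr fun j => (h j).imp fun i hi => hi.trans (hde i)
  have hXpow : ∀ j : J, {P : MvPolynomial (Fin (n + 1)) ℂ | ∃ i, P = X i ^ (a j i + 1)}
      = (fun s => monomial s (1 : ℂ)) '' (Set.range fun i => Finsupp.single i (a j i + 1)) := by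
    intro j
    ext P
    simp only [Set.mem_setOf_eq, Set.mem_image, Set.mem_range, X_pow_eq_monomial]
    constructor
    · rintro ⟨i, rfl⟩; exact ⟨_, ⟨i, rfl⟩, rfl⟩
    · rintro ⟨_, ⟨i, rfl⟩, rfl⟩; exact ⟨i, rfl⟩
  have hIeq : (Ideal.span {X (0 : Fin (n + 1))} +
      ⨅ j, Ideal.span {P : MvPolynomial (Fin (n + 1)) ℂ | ∃ i, P = X i ^ (a j i + 1)})
      = Ideal.span ((fun s => monomial s (1 : ℂ)) '' D) := by
    apply le_antisymm
    · apply sup_le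
      · rw [Ideal.span_le, Set.singleton_subset_iff, SetLike.mem_coe,
          mem_ideal_span_monomial_image]
        intro d hd
        rw [support_X] at hd
        simp only [Finset.mem_singleton] at hd
        subst hd
        exact ⟨_, Or.inl (by simp), le_rfl⟩
      · intro x hx
        rw [mem_ideal_span_monomial_image]
        intro d hd
        refine ⟨d, ?_, le_rfl⟩
        by_cases hd0 : 1 ≤ d 0
        · exact Or.inl hd0
        right
        intro j
        have hj := Ideal.mem_iInf.mp hx j
        rw [hXpow j, mem_ideal_span_monomial_image] at hj
        obtain ⟨s, ⟨i, rfl⟩, hs⟩ := hj d hd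
        exact ⟨i, Finsupp.single_le_iff.mp hs⟩
    · rw [Ideal.span_le]
      rintro P ⟨d, hd, rfl⟩
      rcases hd with hd0 | hall
      · apply Ideal.mem_sup_left
        rw [Ideal.mem_span_singleton,
          show (X (0 : Fin (n + 1)) : MvPolynomial _ ℂ) = monomial (Finsupp.single 0 1) 1 from
            by rw [← X_pow_eq_monomial, pow_one],
          monomial_dvd_monomial]
        exact ⟨Or.inr (Finsupp.single_le_iff.mpr hd0), dvd_refl 1⟩
      · apply Ideal.mem_sup_right
        rw [Ideal.mem_iInf]
        intro j
        rw [hXpow j, mem_ideal_span_monomial_image]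
        intro d' hd'
        rw [support_monomial, if_neg one_ne_zero, Finset.mem_singleton] at hd'
        subst hd'
        obtain ⟨i, hi⟩ := hall j
        exact ⟨Finsupp.single i (a j i + 1), ⟨i, rfl⟩, Finsupp.single_le_iff.mpr hi⟩
  rw [hIeq, aux_finrank D hup U hD]
  have hcard : ∀ (t : Finset J) (ht : t.Nonempty),
      ((t.inf' ht fun j => Finset.Iic (b j)).card : ℤ) =
        ∏ i : Fin n, ((t.inf' ht fun j => a j i.succ : ℕ) + 1 : ℤ) := by
    intro t ht
    have h1 : (t.inf' ht fun j => Finset.Iic (b j)) = Finset.Iic (t.inf' ht b) :=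
      (Finset.apply_inf'_eq_inf'_comp ht Finset.Iic
        (fun x y => by ext d; simp [Finset.inf_eq_inter, le_inf_iff])).symm
    have hc : ∀ i, (t.inf' ht b) i = t.inf' ht (fun j => b j i) := fun i =>
      Finset.apply_inf'_eq_inf'_comp ht (fun f : Fin (n + 1) →₀ ℕ => f i) (fun x y => Finsupp.inf_apply x y i)
    have hc0 : (t.inf' ht b) 0 = 0 := by
      rw [hc]
      obtain ⟨j0, hj0⟩ := ht
      have h := Finset.inf'_le (fun j => b j 0) hj0
      rw [hbapp] at h
      simp at h
      omega
    have hcs : ∀ i : Fin n, (t.inf' ht b) i.succ = t.inf' ht fun j => a j i.succ := by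
      intro i
      rw [hc]
      exact Finset.inf'_congr ht rfl fun j _ => by
        rw [hbapp, if_neg (Fin.succ_ne_zero i)]
    have hnat : (t.inf' ht fun j => Finset.Iic (b j)).card =
        ∏ i : Fin n, ((t.inf' ht fun j => a j i.succ) + 1) := by
      rw [h1, Finsupp.card_Iic]
      simp only [Nat.card_Iic]
      rw [Finset.prod_subset (Finset.subset_univ _)
        (fun i _ hi => by rw [Finsupp.notMem_support_iff.mp hi]; rfl),
        Fin.prod_univ_succ, hc0]
      simp only [zero_add, one_mul]
      exact Finset.prod_congr rfl fun i _ => by rw [hcs]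
    rw [hnat]
    push_cast
    rfl
  rw [hU, Finset.inclusion_exclusion_card_biUnion, Finset.univ_eq_attach]
  refine Finset.sum_congr rfl fun t _ => ?_
  rw [hcard]
end
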